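/- Suppose (f1,f2,f3,f4) and (g1,g2,g3,g4) are tuples of polynomials in C[y1,...,yd] with gcd(f1,f2) = gcd(f3,f4) = 1 and gcd(g1,g2) = gcd(g3,g4) = 1, and suppose f2f3 = g2g3, f1f3 = g1g3, f2f4 = g2g4, f1f4 = g1g4, with not all products zero. Then there exists λ ∈ C* such that g1 = λf1, g2 = λf2, g3 = λ^{-1}f3, g4 = λ^{-1}f4. -/

import Mathlib

open MvPolynomial

/-- Units of a multivariate polynomial ring over ℂ are nonzero constants. -/
lemma mv_isUnit_eq_C : ∀ (d : ℕ) (p : MvPolynomial (Fin d) ℂ), IsUnit p →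
    ∃ c : ℂ, c ≠ 0 ∧ p = C c := by
  intro d
  induction d with
  | zero =>
    intro p hp
    refine ⟨p.coeff 0, ?_, eq_C_of_isEmpty p⟩
    intro h
    have := eq_C_of_isEmpty p
    rw [h, map_zero] at this
    exact hp.ne_zero this
  | succ n ih =>
    intro p hp
    have h2 : IsUnit (finSuccEquiv ℂ n p) := hp.map (finSuccEquiv ℂ n)
    obtain ⟨r, hr, hCr⟩ := Polynomial.isUnit_iff.mp h2
    obtain ⟨c, hc, rfl⟩ := ih r hr
    refine ⟨c, hc, ?_⟩
    have h3 : p = (finSuccEquiv ℂ n).symm (Polynomial.C (C c)) := by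
      rw [hCr, AlgEquiv.symm_apply_apply]
    have h4 := RingHom.congr_fun (finSuccEquiv_comp_C_eq_C (R := ℂ) n) c
    simp only [RingHom.comp_apply, RingHom.coe_coe] at h4
    rw [h3, h4]

/-- Uniqueness of the factorization for the quadric: two Σ-irreducible
tuples giving the same products differ by (λ,λ,λ⁻¹,λ⁻¹). -/
theorem quadric_param_uniqueness (d : ℕ)
    (f1 f2 f3 f4 g1 g2 g3 g4 : MvPolynomial (Fin d) ℂ)
    (hf12 : IsRelPrime f1 f2) (hf34 : IsRelPrime f3 f4)
    (hg12 : IsRelPrime g1 g2) (hg34 : IsRelPrime g3 g4)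
    (e0 : f2 * f3 = g2 * g3) (e1 : f1 * f3 = g1 * g3)
    (e2 : f2 * f4 = g2 * g4) (e3 : f1 * f4 = g1 * g4)
    (hne : ¬ (f2 * f3 = 0 ∧ f1 * f3 = 0 ∧ f2 * f4 = 0 ∧ f1 * f4 = 0)) :
    ∃ l : ℂˣ, g1 = C (l : ℂ) * f1 ∧ g2 = C (l : ℂ) * f2 ∧
      g3 = C ((l : ℂ)⁻¹) * f3 ∧ g4 = C ((l : ℂ)⁻¹) * f4 := by
  have hCne : ∀ c : ℂ, c ≠ 0 → (C c : MvPolynomial (Fin d) ℂ) ≠ 0 := by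
    intro c hc h
    exact hc (by simpa using h)
  by_cases h1 : f1 = 0
  · -- f1 = 0 : then f2 is a unit
    subst h1
    have hf2u : IsUnit f2 := hf12 (dvd_zero f2) dvd_rfl
    obtain ⟨a, ha, rfl⟩ := mv_isUnit_eq_C d f2 hf2u
    -- g1 = 0
    have hg1 : g1 = 0 := by
      by_contra hg1
      have hg3 : g3 = 0 := by
        have : g1 * g3 = 0 := by rw [← e1]; ring
        rcases mul_eq_zero.mp this with h | h
        · exact absurd h hg1
        · exact h
      have hg4 : g4 = 0 := by
        have : g1 * g4 = 0 := by rw [← e3]; ring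
        rcases mul_eq_zero.mp this with h | h
        · exact absurd h hg1
        · exact h
      have hf3 : f3 = 0 := by
        have : C a * f3 = 0 := by rw [e0, hg3]; ring
        rcases mul_eq_zero.mp this with h | h
        · exact absurd h (hCne a ha)
        · exact h
      have hf4 : f4 = 0 := by
        have : C a * f4 = 0 := by rw [e2, hg4]; ring
        rcases mul_eq_zero.mp this with h | h
        · exact absurd h (hCne a ha)
        · exact h
      exact hne ⟨by rw [hf3, mul_zero], by rw [hf3, mul_zero],
        by rw [hf4, mul_zero], by rw [hf4, mul_zero]⟩
    subst hg1
    have hg2u : IsUnit g2 := hg12 (dvd_zero g2) dvd_rfl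
    obtain ⟨b, hb, rfl⟩ := mv_isUnit_eq_C d g2 hg2u
    refine ⟨Units.mk0 (b * a⁻¹) (by simp [hb, ha]), ?_, ?_, ?_, ?_⟩
    · simp
    · rw [← C_mul]
      congr 1
      rw [Units.val_mk0]
      field_simp
    · apply mul_left_cancel₀ (hCne b hb)
      rw [← mul_assoc, ← C_mul]
      have : b * ((Units.mk0 (b * a⁻¹) (by simp [hb, ha]) : ℂ))⁻¹ = a := by
        simp [Units.val_mk0]
        field_simp
      rw [this, ← e0]
    · apply mul_left_cancel₀ (hCne b hb)
      rw [← mul_assoc, ← C_mul]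
      have : b * ((Units.mk0 (b * a⁻¹) (by simp [hb, ha]) : ℂ))⁻¹ = a := by
        simp [Units.val_mk0]
        field_simp
      rw [this, ← e2]
  · -- f1 ≠ 0
    have hg1 : g1 ≠ 0 := by
      intro hg1
      have hf3 : f3 = 0 := by
        have : f1 * f3 = 0 := by rw [e1, hg1, zero_mul]
        rcases mul_eq_zero.mp this with h | h
        · exact absurd h h1
        · exact h
      have hf4 : f4 = 0 := by
        have : f1 * f4 = 0 := by rw [e3, hg1, zero_mul]
        rcases mul_eq_zero.mp this with h | h
        · exact absurd h h1
        · exact h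
      exact hne ⟨by rw [hf3, mul_zero], by rw [hf3, mul_zero],
        by rw [hf4, mul_zero], by rw [hf4, mul_zero]⟩
    -- key cross-relation
    have key : f1 * g2 = f2 * g1 := by
      by_cases h3 : f3 = 0
      · have h4 : f4 ≠ 0 := by
          intro h4
          exact hne ⟨by rw [h3, mul_zero], by rw [h3, mul_zero],
            by rw [h4, mul_zero], by rw [h4, mul_zero]⟩
        apply mul_right_cancel₀ h4
        calc f1 * g2 * f4 = g2 * (f1 * f4) := by ring
          _ = g2 * (g1 * g4) := by rw [e3]
          _ = g1 * (g2 * g4) := by ring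
          _ = g1 * (f2 * f4) := by rw [e2]
          _ = f2 * g1 * f4 := by ring
      · apply mul_right_cancel₀ h3
        calc f1 * g2 * f3 = g2 * (f1 * f3) := by ring
          _ = g2 * (g1 * g3) := by rw [e1]
          _ = g1 * (g2 * g3) := by ring
          _ = g1 * (f2 * f3) := by rw [e0]
          _ = f2 * g1 * f3 := by ring
    have hdvd1 : f1 ∣ g1 := hf12.dvd_of_dvd_mul_left ⟨g2, key.symm⟩
    have hdvd2 : g1 ∣ f1 := hg12.dvd_of_dvd_mul_left ⟨f2, by linear_combination key⟩
    obtain ⟨t, ht⟩ := hdvd1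
    obtain ⟨s, hs⟩ := hdvd2
    have hts : t * s = 1 := by
      have : f1 * (t * s) = f1 * 1 := by
        rw [mul_one]
        nth_rewrite 2 [hs]
        rw [ht]; ring
      exact mul_left_cancel₀ h1 this
    obtain ⟨c, hc, rfl⟩ := mv_isUnit_eq_C d t (IsUnit.of_mul_eq_one s hts)
    refine ⟨Units.mk0 c hc, ?_, ?_, ?_, ?_⟩
    · simp only [Units.val_mk0]; rw [ht]; ring
    · simp only [Units.val_mk0]
      apply mul_left_cancel₀ h1
      rw [key, ht]; ring
    · apply mul_left_cancel₀ (hCne c hc)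
      have hf3 : f1 * f3 = C c * (f1 * g3) := by
        rw [e1, ht]; ring
      have hf3' : f3 = C c * g3 := by
        apply mul_left_cancel₀ h1
        rw [hf3]; ring
      rw [← mul_assoc, ← C_mul]
      simp only [Units.val_mk0]
      rw [mul_inv_cancel₀ hc, C_1, one_mul, hf3']
    · apply mul_left_cancel₀ (hCne c hc)
      have hf4 : f1 * f4 = C c * (f1 * g4) := by
        rw [e3, ht]; ring
      have hf4' : f4 = C c * g4 := by
        apply mul_left_cancel₀ h1
        rw [hf4]; ring
      rw [← mul_assoc, ← C_mul]
      simp only [Units.val_mk0]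
      rw [mul_inv_cancel₀ hc, C_1, one_mul, hf4']
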